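/- arXiv:2508.20956 — 4 statements merged into one kernel-verified Lean document; each statement's English description precedes it below -/
import Mathlib

section
/- If the upper triangular operator matrix M_C = [[A, C],[0, B]] is Fredholm, then A is Fredholm if and only if B is Fredholm. -/
open ContinuousLinearMap Cardinal

noncomputable section

universe u

/-- nullity: dimension of the kernel, as a cardinal -/
def alphaDim {E F : Type u} [NormedAddCommGroup E] [NormedSpace ℂ E]
    [NormedAddCommGroup F] [NormedSpace ℂ F] (T : E →L[ℂ] F) : Cardinal :=
  Module.rank ℂ (LinearMap.ker (T : E →ₗ[ℂ] F))

/-- deficiency: dimension of the cokernel, as a cardinal -/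
def betaDim {E F : Type u} [NormedAddCommGroup E] [NormedSpace ℂ E]
    [NormedAddCommGroup F] [NormedSpace ℂ F] (T : E →L[ℂ] F) : Cardinal :=
  Module.rank ℂ (F ⧸ LinearMap.range (T : E →ₗ[ℂ] F))

/-- the upper triangular operator matrix [[A, C],[0, B]] acting on H ⊕ K -/
def MC {H K : Type u} [NormedAddCommGroup H] [NormedSpace ℂ H]
    [NormedAddCommGroup K] [NormedSpace ℂ K]
    (A : H →L[ℂ] H) (B : K →L[ℂ] K) (C : K →L[ℂ] H) : (H × K) →L[ℂ] (H × K) :=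
  (A.comp (fst ℂ H K) + C.comp (snd ℂ H K)).prod (B.comp (snd ℂ H K))

/-- T - λ -/
def shf {E : Type u} [NormedAddCommGroup E] [NormedSpace ℂ E]
    (T : E →L[ℂ] E) (l : ℂ) : E →L[ℂ] E := T - l • ContinuousLinearMap.id ℂ E

/-- Fredholm left invertible spectrum -/
def sigmaFLI {E : Type u} [NormedAddCommGroup E] [NormedSpace ℂ E]
    (T : E →L[ℂ] E) : Set ℂ :=
  {l | ¬ (Function.Injective (shf T l) ∧ betaDim (shf T l) < ℵ₀)}

/-- Fredholm right invertible spectrum -/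
def sigmaFRI {E : Type u} [NormedAddCommGroup E] [NormedSpace ℂ E]
    (T : E →L[ℂ] E) : Set ℂ :=
  {l | ¬ (Function.Surjective (shf T l) ∧ alphaDim (shf T l) < ℵ₀)}

/-- polynomially convex hull: the set together with the bounded components of its complement -/
def polyHull (S : Set ℂ) : Set ℂ :=
  S ∪ {z | z ∉ S ∧ Bornology.IsBounded (connectedComponentIn Sᶜ z)}

variable {H K : Type u}
  [NormedAddCommGroup H] [InnerProductSpace ℂ H] [CompleteSpace H]
  [NormedAddCommGroup K] [InnerProductSpace ℂ K] [CompleteSpace K]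

theorem stmt_8 (A : H →L[ℂ] H) (B : K →L[ℂ] K) (C : K →L[ℂ] H)
    (h : alphaDim (MC A B C) < ℵ₀ ∧ betaDim (MC A B C) < ℵ₀) :
    ((alphaDim A < ℵ₀ ∧ betaDim A < ℵ₀) ↔ (alphaDim B < ℵ₀ ∧ betaDim B < ℵ₀)) := by
  obtain ⟨hαM, hβM⟩ := h
  set M : (H × K) →L[ℂ] (H × K) := MC A B C with hMdef
  have happ : ∀ x y, M (x, y) = (A x + C y, B y) := fun x y => rfl
  -- connecting map δ : ker B → coker A, y ↦ [C y]
  let δ : ↥(LinearMap.ker (B : K →ₗ[ℂ] K)) →ₗ[ℂ] H ⧸ LinearMap.range (A : H →ₗ[ℂ] H) :=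
    (LinearMap.range (A : H →ₗ[ℂ] H)).mkQ ∘ₗ (C : K →ₗ[ℂ] H) ∘ₗ (LinearMap.ker (B : K →ₗ[ℂ] K)).subtype
  -- p : ker M → ker B, (x,y) ↦ y
  let p : ↥(LinearMap.ker (M : H × K →ₗ[ℂ] H × K)) →ₗ[ℂ] ↥(LinearMap.ker (B : K →ₗ[ℂ] K)) :=
    LinearMap.codRestrict (LinearMap.ker (B : K →ₗ[ℂ] K))
      ((LinearMap.snd ℂ H K) ∘ₗ (LinearMap.ker (M : H × K →ₗ[ℂ] H × K)).subtype)
      (fun z => by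
        have hz : M (z : H × K) = 0 := z.2
        have : B (z : H × K).2 = 0 := congrArg Prod.snd hz
        simpa [LinearMap.mem_ker] using this)
  -- exactness: ker δ ≤ range p
  have hkerδ : LinearMap.ker δ ≤ LinearMap.range p := by
    rintro ⟨y, hy⟩ hmem
    have h2 : C y ∈ LinearMap.range (A : H →ₗ[ℂ] H) := by
      have h1 : (LinearMap.range (A : H →ₗ[ℂ] H)).mkQ (C y) = 0 := hmem
      rwa [Submodule.mkQ_apply, Submodule.Quotient.mk_eq_zero] at h1
    obtain ⟨u, hu⟩ := h2
    have hBy : B y = 0 := hy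
    refine ⟨⟨(-u, y), ?_⟩, Subtype.ext rfl⟩
    have : M (-u, y) = (A (-u) + C y, B y) := rfl
    simp only [LinearMap.mem_ker, ContinuousLinearMap.coe_coe] at hu ⊢
    rw [this, map_neg, hu, neg_add_cancel, hBy]
    rfl
  -- φ : coker A → coker M, [x] ↦ [(x, 0)]
  have hinl : LinearMap.range (A : H →ₗ[ℂ] H) ≤ (LinearMap.range (M : H × K →ₗ[ℂ] H × K)).comap (LinearMap.inl ℂ H K) := by
    rintro _ ⟨u, rfl⟩
    refine ⟨(u, 0), ?_⟩
    have : M (u, 0) = (A u + C 0, B 0) := rfl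
    simp only [ContinuousLinearMap.coe_coe, this, map_zero, add_zero]
    rfl
  let φ : (H ⧸ LinearMap.range (A : H →ₗ[ℂ] H)) →ₗ[ℂ] ((H × K) ⧸ LinearMap.range (M : H × K →ₗ[ℂ] H × K)) :=
    (LinearMap.range (A : H →ₗ[ℂ] H)).mapQ (LinearMap.range (M : H × K →ₗ[ℂ] H × K)) (LinearMap.inl ℂ H K) hinl
  -- exactness: ker φ ≤ range δ
  have hkerφ : LinearMap.ker φ ≤ LinearMap.range δ := by
    intro q hq
    obtain ⟨x, rfl⟩ := (LinearMap.range (A : H →ₗ[ℂ] H)).mkQ_surjective q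
    have h1 : (x, (0 : K)) ∈ LinearMap.range (M : H × K →ₗ[ℂ] H × K) := by
      have h0 : φ ((LinearMap.range (A : H →ₗ[ℂ] H)).mkQ x) = 0 := hq
      rwa [Submodule.mkQ_apply, Submodule.mapQ_apply, Submodule.Quotient.mk_eq_zero,
        LinearMap.inl_apply] at h0
    obtain ⟨⟨u, v⟩, huv⟩ := h1
    have huv' : (A u + C v, B v) = (x, 0) := huv
    have hx : A u + C v = x := congrArg Prod.fst huv'
    have hv : B v = 0 := congrArg Prod.snd huv'
    refine ⟨⟨v, LinearMap.mem_ker.mpr hv⟩, ?_⟩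
    show (LinearMap.range (A : H →ₗ[ℂ] H)).mkQ (C v) = (LinearMap.range (A : H →ₗ[ℂ] H)).mkQ x
    rw [← hx, map_add]
    have : (LinearMap.range (A : H →ₗ[ℂ] H)).mkQ (A u) = 0 := by
      rw [Submodule.mkQ_apply, Submodule.Quotient.mk_eq_zero]
      exact ⟨u, rfl⟩
    rw [this, zero_add]
  -- key rank facts
  have hδdom : Module.rank ℂ ↥(LinearMap.range δ) ≤ Module.rank ℂ ↥(LinearMap.ker (B : K →ₗ[ℂ] K)) :=
    LinearMap.rank_le_domain δ
  have hpdom : Module.rank ℂ ↥(LinearMap.range p) ≤ Module.rank ℂ ↥(LinearMap.ker (M : H × K →ₗ[ℂ] H × K)) :=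
    LinearMap.rank_le_domain p
  -- βA finite → αB finite
  have dir1 : betaDim A < ℵ₀ → alphaDim B < ℵ₀ := by
    intro hβA
    have e1 := LinearMap.rank_range_add_rank_ker δ
    have h1 : Module.rank ℂ ↥(LinearMap.range δ) < ℵ₀ :=
      lt_of_le_of_lt (Submodule.rank_le _) hβA
    have h2 : Module.rank ℂ ↥(LinearMap.ker δ) < ℵ₀ :=
      lt_of_le_of_lt ((Submodule.rank_mono hkerδ).trans hpdom) hαM
    show Module.rank ℂ ↥(LinearMap.ker (B : K →ₗ[ℂ] K)) < ℵ₀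
    rw [← e1]
    exact add_lt_aleph0 h1 h2
  -- αB finite → βA finite
  have dir2 : alphaDim B < ℵ₀ → betaDim A < ℵ₀ := by
    intro hαB
    have e1 := LinearMap.rank_range_add_rank_ker φ
    have h1 : Module.rank ℂ ↥(LinearMap.range φ) < ℵ₀ :=
      lt_of_le_of_lt (Submodule.rank_le _) hβM
    have h2 : Module.rank ℂ ↥(LinearMap.ker φ) < ℵ₀ :=
      lt_of_le_of_lt ((Submodule.rank_mono hkerφ).trans hδdom) hαB
    show Module.rank ℂ (H ⧸ LinearMap.range (A : H →ₗ[ℂ] H)) < ℵ₀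
    rw [← e1]
    exact add_lt_aleph0 h1 h2
  -- αA ≤ αM
  have hαA : alphaDim A < ℵ₀ := by
    let i : ↥(LinearMap.ker (A : H →ₗ[ℂ] H)) →ₗ[ℂ] ↥(LinearMap.ker (M : H × K →ₗ[ℂ] H × K)) :=
      LinearMap.codRestrict (LinearMap.ker (M : H × K →ₗ[ℂ] H × K))
        ((LinearMap.inl ℂ H K) ∘ₗ (LinearMap.ker (A : H →ₗ[ℂ] H)).subtype)
        (fun x => by
          have hx : A (x : H) = 0 := x.2
          have : M ((x : H), 0) = (A (x : H) + C 0, B 0) := rfl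
          simp only [LinearMap.mem_ker, ContinuousLinearMap.coe_coe, LinearMap.comp_apply, LinearMap.inl_apply,
            Submodule.subtype_apply]
          rw [this, hx, map_zero, map_zero, add_zero]
          rfl)
    have hi : Function.Injective i := by
      intro a b hab
      have : ((a : H), (0 : K)) = ((b : H), (0 : K)) := congrArg Subtype.val hab
      exact Subtype.ext (congrArg Prod.fst this)
    exact lt_of_le_of_lt (LinearMap.rank_le_of_injective i hi) hαM
  -- βB ≤ βM
  have hβB : betaDim B < ℵ₀ := by
    have hsnd : LinearMap.range (M : H × K →ₗ[ℂ] H × K) ≤ (LinearMap.range (B : K →ₗ[ℂ] K)).comap (LinearMap.snd ℂ H K) := by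
      rintro _ ⟨⟨x, y⟩, rfl⟩
      exact ⟨y, rfl⟩
    let ψ : ((H × K) ⧸ LinearMap.range (M : H × K →ₗ[ℂ] H × K)) →ₗ[ℂ] (K ⧸ LinearMap.range (B : K →ₗ[ℂ] K)) :=
      (LinearMap.range (M : H × K →ₗ[ℂ] H × K)).mapQ (LinearMap.range (B : K →ₗ[ℂ] K)) (LinearMap.snd ℂ H K) hsnd
    have hψ : Function.Surjective ψ := by
      intro q
      obtain ⟨y, rfl⟩ := (LinearMap.range (B : K →ₗ[ℂ] K)).mkQ_surjective q
      exact ⟨(LinearMap.range (M : H × K →ₗ[ℂ] H × K)).mkQ (0, y), by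
        rw [Submodule.mkQ_apply, Submodule.mapQ_apply]; rfl⟩
    exact lt_of_le_of_lt (LinearMap.rank_le_of_surjective ψ hψ) hβM
  exact ⟨fun ⟨_, hA2⟩ => ⟨dir1 hA2, hβB⟩, fun ⟨hB1, _⟩ => ⟨hαA, dir2 hB1⟩⟩
end
end

section
/- If the operator matrix M_C = [[A, C],[0, B]] is Fredholm-left-invertible (injective with finite-codimensional range), then A is left invertible, B is lower semi-Fredholm, and either dim ker(B) ≤ dim coker(A) < ∞ or dim ker(B) = dim coker(A) = ∞. -/
open ContinuousLinearMap Cardinal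

noncomputable section

universe u

variable {H K : Type u}
  [NormedAddCommGroup H] [InnerProductSpace ℂ H] [CompleteSpace H]
  [NormedAddCommGroup K] [InnerProductSpace ℂ K] [CompleteSpace K]

theorem stmt_9
  [TopologicalSpace.SeparableSpace H] [TopologicalSpace.SeparableSpace K]
    (hH : ¬ FiniteDimensional ℂ H) (hK : ¬ FiniteDimensional ℂ K)
    (A : H →L[ℂ] H) (B : K →L[ℂ] K) (C : K →L[ℂ] H)
    (h : Function.Injective (MC A B C) ∧ betaDim (MC A B C) < ℵ₀) :
    (Function.Injective A ∧ IsClosed (Set.range A)) ∧ betaDim B < ℵ₀ ∧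
      ((alphaDim B ≤ betaDim A ∧ betaDim A < ℵ₀) ∨ (ℵ₀ ≤ alphaDim B ∧ ℵ₀ ≤ betaDim A)) := by
  obtain ⟨hinj, hbeta⟩ := h
  have hMC : ∀ z : H × K, MC A B C z = (A z.1 + C z.2, B z.2) := fun z => rfl
  set R : Submodule ℂ (H × K) := LinearMap.range (MC A B C : (H × K) →ₗ[ℂ] (H × K)) with hR
  -- the quotient by R is finite dimensional
  have hQfin : Module.Finite ℂ ((H × K) ⧸ R) := Module.rank_lt_aleph0_iff.mp hbeta
  obtain ⟨F, hF⟩ := Submodule.exists_isCompl R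
  haveI : FiniteDimensional ℂ ((H × K) ⧸ R) := hQfin
  haveI hFfin : FiniteDimensional ℂ F :=
    Module.Finite.equiv (Submodule.quotientEquivOfIsCompl R F hF)
  haveI : CompleteSpace F := FiniteDimensional.complete ℂ F
  -- Φ : (H×K) × F → H×K, (z, f) ↦ M z + f is a continuous linear bijection
  set Φ : ((H × K) × F) →L[ℂ] (H × K) :=
    (MC A B C).comp (fst ℂ (H × K) F) + F.subtypeL.comp (snd ℂ (H × K) F) with hPhidef
  have hPhiapp : ∀ z : (H × K) × F, Φ z = MC A B C z.1 + (z.2 : H × K) := fun z => rfl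
  have hker : LinearMap.ker (Φ : ((H × K) × F) →ₗ[ℂ] (H × K)) = ⊥ := by
    rw [LinearMap.ker_eq_bot']
    intro z hz
    have hz' : MC A B C z.1 = -(z.2 : H × K) := by
      have h0 := hPhiapp z
      rw [show Φ z = 0 from hz] at h0
      exact eq_neg_of_add_eq_zero_left h0.symm
    have hmem : MC A B C z.1 ∈ R ⊓ F := by
      refine ⟨LinearMap.mem_range.mpr ⟨z.1, rfl⟩, ?_⟩
      rw [hz']
      exact F.neg_mem z.2.2
    rw [hF.inf_eq_bot, Submodule.mem_bot] at hmem
    have h1 : z.1 = 0 := hinj (by rw [hmem, map_zero])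
    have h2 : z.2 = 0 := by
      have : -(z.2 : H × K) = 0 := by rw [← hz', hmem]
      exact Subtype.ext (by simpa using this)
    exact Prod.ext h1 h2
  have hrange : LinearMap.range (Φ : ((H × K) × F) →ₗ[ℂ] (H × K)) = ⊤ := by
    rw [LinearMap.range_eq_top]
    intro w
    have hw : w ∈ R ⊔ F := by rw [hF.sup_eq_top]; trivial
    obtain ⟨r, hr, f, hf, rfl⟩ := Submodule.mem_sup.mp hw
    obtain ⟨u, rfl⟩ := LinearMap.mem_range.mp hr
    exact ⟨(u, ⟨f, hf⟩), rfl⟩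
  set e : ((H × K) × F) ≃L[ℂ] (H × K) := ContinuousLinearEquiv.ofBijective Φ hker hrange
    with hedef
  have heapp : ∀ z : (H × K) × F, e z = Φ z := fun z => rfl
  -- bound for A from below
  have keyA : ∀ x : H, ‖x‖ ≤ ‖(e.symm : (H × K) →L[ℂ] ((H × K) × F))‖ * ‖A x‖ := by
    intro x
    have h1 : e ((x, 0), 0) = (A x, 0) := by
      rw [heapp, hPhiapp]
      simp [hMC]
    have h2 : ((x, (0 : K)), (0 : F)) = e.symm (A x, 0) := by
      rw [← h1, ContinuousLinearEquiv.symm_apply_apply]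
    calc ‖x‖ ≤ ‖((x, (0 : K)), (0 : F))‖ :=
          le_trans (norm_fst_le (x, (0 : K))) (norm_fst_le ((x, (0 : K)), (0 : F)))
      _ = ‖(e.symm : (H × K) →L[ℂ] ((H × K) × F)) (A x, 0)‖ := by rw [h2]; rfl
      _ ≤ ‖(e.symm : (H × K) →L[ℂ] ((H × K) × F))‖ * ‖((A x, (0 : K)) : H × K)‖ :=
          ContinuousLinearMap.le_opNorm _ _
      _ = ‖(e.symm : (H × K) →L[ℂ] ((H × K) × F))‖ * ‖A x‖ := by
          rw [Prod.norm_def]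
          simp [max_eq_left (norm_nonneg (A x))]
  have hAanti : AntilipschitzWith ‖(e.symm : (H × K) →L[ℂ] ((H × K) × F))‖₊ A :=
    A.antilipschitz_of_bound (fun x => by simpa using keyA x)
  have hAinj : Function.Injective A := hAanti.injective
  have hAclosed : IsClosed (Set.range A) := hAanti.isClosed_range A.uniformContinuous
  -- betaDim B < ℵ₀ : the quotient K ⧸ range B is a quotient of (H×K) ⧸ R
  have hleB : R ≤ Submodule.comap (LinearMap.snd ℂ H K) (LinearMap.range (B : K →ₗ[ℂ] K)) := by
    rintro w ⟨z, rfl⟩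
    simp only [Submodule.mem_comap, LinearMap.mem_range, LinearMap.snd_apply, hMC]
    exact ⟨z.2, rfl⟩
  set q2 : ((H × K) ⧸ R) →ₗ[ℂ] (K ⧸ LinearMap.range (B : K →ₗ[ℂ] K)) :=
    Submodule.mapQ R (LinearMap.range (B : K →ₗ[ℂ] K)) (LinearMap.snd ℂ H K) hleB with hq2def
  have hq2surj : Function.Surjective q2 := by
    intro c
    obtain ⟨k, rfl⟩ := Submodule.mkQ_surjective _ c
    exact ⟨Submodule.Quotient.mk ((0 : H), k), by
      rw [hq2def]
      erw [Submodule.mapQ_apply]⟩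
  have hbB : betaDim B < ℵ₀ := lt_of_le_of_lt (q2.rank_le_of_surjective hq2surj) hbeta
  -- alphaDim B ≤ betaDim A : C induces an injection ker B → H ⧸ range A
  set φ : (LinearMap.ker (B : K →ₗ[ℂ] K)) →ₗ[ℂ] (H ⧸ LinearMap.range (A : H →ₗ[ℂ] H)) :=
    (LinearMap.range (A : H →ₗ[ℂ] H)).mkQ.comp ((C : K →ₗ[ℂ] H).comp (LinearMap.ker (B : K →ₗ[ℂ] K)).subtype) with hφdef
  have hφinj : Function.Injective φ := by
    rw [← LinearMap.ker_eq_bot, LinearMap.ker_eq_bot']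
    intro y hy
    have hy' : C (y : K) ∈ LinearMap.range (A : H →ₗ[ℂ] H) := by
      have : Submodule.Quotient.mk (C (y : K)) = (0 : H ⧸ LinearMap.range (A : H →ₗ[ℂ] H)) := hy
      rwa [Submodule.Quotient.mk_eq_zero] at this
    obtain ⟨x, hx⟩ := LinearMap.mem_range.mp hy'
    have hz : MC A B C (-x, (y : K)) = 0 := by
      rw [hMC]
      have hBy : B (y : K) = 0 := y.2
      simp [show A x = C (y : K) from hx, hBy]
    have := hinj (by rw [hz, map_zero] : MC A B C (-x, (y : K)) = MC A B C 0)
    have hy0 : (y : K) = 0 := congrArg Prod.snd this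
    exact Subtype.ext hy0
  have haB : alphaDim B ≤ betaDim A := φ.rank_le_of_injective hφinj
  -- betaDim A ≤ betaDim (MC) + alphaDim B via the induced map on quotients
  have hleA : LinearMap.range (A : H →ₗ[ℂ] H) ≤ Submodule.comap (LinearMap.inl ℂ H K) R := by
    rintro x ⟨u, rfl⟩
    refine Submodule.mem_comap.mpr (LinearMap.mem_range.mpr ⟨(u, 0), ?_⟩)
    rw [ContinuousLinearMap.coe_coe, hMC]
    simp
  set ψ : (H ⧸ LinearMap.range (A : H →ₗ[ℂ] H)) →ₗ[ℂ] ((H × K) ⧸ R) :=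
    Submodule.mapQ (LinearMap.range (A : H →ₗ[ℂ] H)) R (LinearMap.inl ℂ H K) hleA with hψdef
  have hkerψ : LinearMap.ker ψ ≤ LinearMap.range φ := by
    intro q hq
    obtain ⟨x, rfl⟩ := Submodule.mkQ_surjective _ q
    have hx : ((x, (0 : K)) : H × K) ∈ R := by
      have : ψ (Submodule.Quotient.mk x) = 0 := hq
      rw [hψdef] at this
      erw [Submodule.mapQ_apply] at this
      rwa [Submodule.Quotient.mk_eq_zero] at this
    obtain ⟨⟨u, v⟩, huv⟩ := LinearMap.mem_range.mp hx
    rw [ContinuousLinearMap.coe_coe, hMC] at huv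
    have h1 : A u + C v = x := congrArg Prod.fst huv
    have h2 : B v = 0 := congrArg Prod.snd huv
    refine ⟨⟨v, LinearMap.mem_ker.mpr h2⟩, ?_⟩
    rw [hφdef]
    show Submodule.Quotient.mk (C v) = Submodule.Quotient.mk x
    rw [Submodule.Quotient.eq]
    exact ⟨-u, by simp [← h1]⟩
  have hrankψ : Module.rank ℂ (LinearMap.range ψ) + Module.rank ℂ (LinearMap.ker ψ)
      = betaDim A := ψ.rank_range_add_rank_ker
  have hbA_le : betaDim A ≤ betaDim (MC A B C) + alphaDim B := by
    rw [← hrankψ]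
    refine add_le_add (Submodule.rank_le _) ?_
    refine le_trans (Submodule.rank_mono hkerψ) ?_
    exact le_trans (LinearMap.rank_le_domain φ) le_rfl
  refine ⟨⟨hAinj, hAclosed⟩, hbB, ?_⟩
  rcases lt_or_ge (betaDim A) ℵ₀ with hfin | hinf
  · exact Or.inl ⟨haB, hfin⟩
  · refine Or.inr ⟨?_, hinf⟩
    by_contra h'
    push_neg at h'
    exact absurd (lt_of_le_of_lt hbA_le (Cardinal.add_lt_aleph0 hbeta h')) (not_lt.mpr hinf)
end
end

section
/- Suppose A is left invertible, B is lower semi-Fredholm, and either dim ker(B) ≤ dim coker(A) < ∞ or dim ker(B) = dim coker(A) = ∞. Then there exists a bounded operator C : K → H such that the operator matrix M_C = [[A, C],[0, B]] is injective with finite-codimensional range (FLI). -/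
open ContinuousLinearMap Cardinal

noncomputable section

universe u

lemma myOrthonormalCountable {E : Type u} [NormedAddCommGroup E] [InnerProductSpace ℂ E]
    [TopologicalSpace.SeparableSpace E] {w : Set E}
    (hw : Orthonormal ℂ ((↑) : w → E)) : w.Countable := by
  have hd : Pairwise (Function.onFun Disjoint fun i : w => Metric.ball (i : E) 2⁻¹) := by
    intro i j hij
    apply Metric.ball_disjoint_ball
    have h1 : ‖(i : E)‖ = 1 := hw.1 i
    have h2 : ‖(j : E)‖ = 1 := hw.1 j
    have h3 : inner ℂ (i : E) (j : E) = (0 : ℂ) := hw.2 hij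
    have h4 : ‖(i : E) - (j : E)‖ ^ 2 = 2 := by
      rw [@norm_sub_sq ℂ]
      simp [h1, h2, h3]; norm_num
    have h5 : (1 : ℝ) ≤ ‖(i : E) - (j : E)‖ := by
      nlinarith [norm_nonneg ((i : E) - (j : E))]
    rw [dist_eq_norm]
    linarith
  have : Countable w := hd.countable_of_isOpen_disjoint
    (fun i => Metric.isOpen_ball) (fun i => ⟨i, by simp⟩)
  exact Set.countable_coe_iff.mp this

lemma myExistsL2 (E : Type u) [NormedAddCommGroup E] [InnerProductSpace ℂ E]
    [CompleteSpace E] [TopologicalSpace.SeparableSpace E] (hE : ¬ FiniteDimensional ℂ E) :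
    Nonempty (E ≃ₗᵢ[ℂ] lp (fun _ : ℕ => ℂ) 2) := by
  obtain ⟨w, b, hb⟩ := exists_hilbertBasis ℂ E
  have hwo : Orthonormal ℂ ((↑) : w → E) := hb ▸ b.orthonormal
  have hw : Set.range (⇑b) = w := by rw [hb, Subtype.range_coe]
  have hcount : w.Countable := myOrthonormalCountable hwo
  have hinf : w.Infinite := by
    by_contra h
    rw [Set.not_infinite] at h
    haveI : FiniteDimensional ℂ (Submodule.span ℂ w) := FiniteDimensional.span_of_finite ℂ h
    have hclosed := (Submodule.span ℂ w).closed_of_finiteDimensional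
    have := b.dense_span
    rw [hw, hclosed.submodule_topologicalClosure_eq] at this
    have : FiniteDimensional ℂ (⊤ : Submodule ℂ E) := this ▸ inferInstance
    exact hE (Module.Finite.equiv Submodule.topEquiv)
  haveI : Countable w := hcount.to_subtype
  haveI : Infinite w := hinf.to_subtype
  obtain ⟨d⟩ := nonempty_denumerable w
  let e : ℕ ≃ w := (Denumerable.eqv w).symm
  have hon : Orthonormal ℂ (((↑) : w → E) ∘ e) := hwo.comp e e.injective
  have hrange : Set.range (((↑) : w → E) ∘ e) = w := by
    rw [Set.range_comp, e.range_eq_univ, Set.image_univ, Subtype.range_coe]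
  have hsp : ⊤ ≤ (Submodule.span ℂ (Set.range (((↑) : w → E) ∘ e))).topologicalClosure := by
    rw [hrange]
    rw [← hw]
    exact b.dense_span.ge
  exact ⟨(HilbertBasis.mk hon hsp).repr⟩

lemma myRankQuotMono {M : Type u} [AddCommGroup M] [Module ℂ M] {p q : Submodule ℂ M}
    (h : p ≤ q) : Module.rank ℂ (M ⧸ q) ≤ Module.rank ℂ (M ⧸ p) := by
  refine LinearMap.rank_le_of_surjective (Submodule.mapQ p q LinearMap.id (by simpa)) ?_
  intro x
  obtain ⟨y, rfl⟩ := Submodule.mkQ_surjective q x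
  exact ⟨p.mkQ y, by simp [Submodule.mapQ_apply]⟩

variable {H K : Type u}
  [NormedAddCommGroup H] [InnerProductSpace ℂ H] [CompleteSpace H]
  [NormedAddCommGroup K] [InnerProductSpace ℂ K] [CompleteSpace K]

theorem stmt_10_helper
  [TopologicalSpace.SeparableSpace H] [TopologicalSpace.SeparableSpace K]
    (hH : ¬ FiniteDimensional ℂ H) (hK : ¬ FiniteDimensional ℂ K)
    (A : H →L[ℂ] H) (B : K →L[ℂ] K)
    (hA : Function.Injective A ∧ IsClosed (Set.range A))
    (hB : Module.rank ℂ (K ⧸ LinearMap.range (B : K →ₗ[ℂ] K)) < ℵ₀)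
    (hc : (Module.rank ℂ (LinearMap.ker (B : K →ₗ[ℂ] K)) ≤ Module.rank ℂ (H ⧸ LinearMap.range (A : H →ₗ[ℂ] H)) ∧
            Module.rank ℂ (H ⧸ LinearMap.range (A : H →ₗ[ℂ] H)) < ℵ₀) ∨
          (ℵ₀ ≤ Module.rank ℂ (LinearMap.ker (B : K →ₗ[ℂ] K)) ∧
            ℵ₀ ≤ Module.rank ℂ (H ⧸ LinearMap.range (A : H →ₗ[ℂ] H)))) :
    ∃ C : K →L[ℂ] H, Function.Injective (MC A B C) ∧
      Module.rank ℂ ((H × K) ⧸ LinearMap.range (MC A B C : (H × K) →ₗ[ℂ] (H × K))) < ℵ₀ := by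
  classical
  haveI := UniformSpace.secondCountable_of_separable H
  haveI := UniformSpace.secondCountable_of_separable K
  set U : Submodule ℂ H := LinearMap.range (A : H →ₗ[ℂ] H) with hUdef
  set N : Submodule ℂ K := LinearMap.ker (B : K →ₗ[ℂ] K) with hNdef
  have hUclosed : IsClosed (U : Set H) := by
    have : (U : Set H) = Set.range A := by
      simp [hUdef, LinearMap.coe_range]
    rw [this]; exact hA.2
  haveI : CompleteSpace U := hUclosed.completeSpace_coe
  haveI : CompleteSpace N := (ContinuousLinearMap.isClosed_ker B).completeSpace_coe
  set V : Submodule ℂ H := Uᗮ with hVdef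
  haveI : CompleteSpace V := U.isClosed_orthogonal.completeSpace_coe
  have hcompl : IsCompl U V := Submodule.isCompl_orthogonal_of_hasOrthogonalProjection
  have hrankV : Module.rank ℂ V = Module.rank ℂ (H ⧸ U) :=
    ((Submodule.quotientEquivOfIsCompl U V hcompl).rank_eq).symm
  obtain ⟨C₀, hC₀inj, hC₀rank⟩ :
      ∃ C₀ : N →L[ℂ] V, Function.Injective C₀ ∧
        Module.rank ℂ (V ⧸ LinearMap.range (C₀ : N →ₗ[ℂ] V)) < ℵ₀ := by
    rcases hc with ⟨hle, hfin⟩ | ⟨hBinf, hAinf⟩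
    · haveI hfinV : FiniteDimensional ℂ V := Module.rank_lt_aleph0_iff.mp (hrankV ▸ hfin)
      haveI hfinN : FiniteDimensional ℂ N := Module.rank_lt_aleph0_iff.mp
        (lt_of_le_of_lt hle hfin)
      have hfr : Module.finrank ℂ N ≤ Module.finrank ℂ V :=
        Module.finrank_le_finrank_of_rank_le_rank
          (by rw [Cardinal.lift_le]; exact hrankV ▸ hle) (Module.rank_lt_aleph0_iff.mpr hfinV)
      obtain ⟨g, hg⟩ := exists_linearIndependent_of_le_finrank hfr
      let bN := Module.finBasis ℂ N
      let f : N →ₗ[ℂ] V := bN.constr ℂ g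
      have hfinj : Function.Injective f := by
        rw [← LinearMap.ker_eq_bot, Submodule.eq_bot_iff]
        intro x hx
        rw [LinearMap.mem_ker] at hx
        rw [Module.Basis.constr_apply_fintype] at hx
        have hz := Fintype.linearIndependent_iff.mp hg _ hx
        have h0 : bN.equivFun x = 0 := funext hz
        have := bN.equivFun.injective (by simpa using h0 : bN.equivFun x = bN.equivFun 0)
        simpa using this
      refine ⟨LinearMap.toContinuousLinearMap f, ?_, ?_⟩
      · simpa using hfinj
      · exact lt_of_le_of_lt (rank_quotient_le _) (Module.rank_lt_aleph0_iff.mpr hfinV)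
    · have hNinf : ¬ FiniteDimensional ℂ N := fun h =>
        absurd (Module.rank_lt_aleph0_iff.mpr h) (not_lt.mpr hBinf)
      have hVinf : ¬ FiniteDimensional ℂ V := fun h =>
        absurd (hrankV ▸ Module.rank_lt_aleph0_iff.mpr h) (not_lt.mpr hAinf)
      obtain ⟨eN⟩ := myExistsL2 (↥N) hNinf
      obtain ⟨eV⟩ := myExistsL2 (↥V) hVinf
      let e : (↥N) ≃ₗᵢ[ℂ] (↥V) := eN.trans eV.symm
      refine ⟨(e.toContinuousLinearEquiv : (↥N) →L[ℂ] (↥V)), ?_, ?_⟩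
      · intro a b hab
        exact e.injective hab
      · have hrange : LinearMap.range
            (((e.toContinuousLinearEquiv : (↥N) →L[ℂ] (↥V))) : (↥N) →ₗ[ℂ] (↥V)) = ⊤ := by
          rw [LinearMap.range_eq_top]
          intro v
          exact ⟨e.symm v, by simp⟩
        rw [hrange]
        haveI : Subsingleton ((↥V) ⧸ (⊤ : Submodule ℂ (↥V))) :=
          Submodule.Quotient.subsingleton_iff.mpr rfl
        rw [rank_subsingleton']
        exact aleph0_pos
  set C : K →L[ℂ] H := V.subtypeL.comp (C₀.comp (N.orthogonalProjectionOnto)) with hCdef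
  have hCy : ∀ (y : K) (hy : y ∈ N), C y = ↑(C₀ ⟨y, hy⟩) := by
    intro y hy
    simp only [hCdef, ContinuousLinearMap.comp_apply, Submodule.subtypeL_apply]
    congr 1
    congr 1
    exact Submodule.orthogonalProjectionOnto_mem_subspace_eq_self (⟨y, hy⟩ : N)
  constructor
  constructor
  · -- injectivity
    have key : ∀ z : H × K, MC A B C z = 0 → z = 0 := by
      rintro ⟨x, y⟩ hz
      have h1 : A x + C y = 0 := congrArg Prod.fst hz
      have h2 : B y = 0 := congrArg Prod.snd hz
      have hy : y ∈ N := LinearMap.mem_ker.mpr h2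
      rw [hCy y hy] at h1
      have hmemU : A x ∈ U := LinearMap.mem_range_self _ x
      have hmemV : A x ∈ V := by
        have : A x = -(↑(C₀ ⟨y, hy⟩) : H) := eq_neg_of_add_eq_zero_left h1
        rw [this]; exact neg_mem (C₀ ⟨y, hy⟩).2
      have hAx : A x = 0 := by
        have := hcompl.disjoint
        rw [Submodule.disjoint_def] at this
        exact this _ hmemU hmemV
      have hx : x = 0 := hA.1 (by simpa using hAx)
      have hc0 : (↑(C₀ ⟨y, hy⟩) : H) = 0 := by rw [hAx] at h1; simpa using h1
      have : C₀ ⟨y, hy⟩ = 0 := Subtype.ext hc0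
      have : (⟨y, hy⟩ : N) = 0 := hC₀inj (by simpa using this)
      have hy0 : y = 0 := congrArg Subtype.val this
      simp [hx, hy0]
    intro a b hab
    have := key (a - b) (by rw [map_sub, hab, sub_self])
    exact sub_eq_zero.mp this
  · -- range
    set W : Submodule ℂ H := Submodule.map V.subtype (LinearMap.range (C₀ : N →ₗ[ℂ] V))
      with hWdef
    set S : Submodule ℂ H := U ⊔ W with hSdef
    set R : Submodule ℂ K := LinearMap.range (B : K →ₗ[ℂ] K) with hRdef
    have hP : S.prod R ≤ LinearMap.range (MC A B C : (H × K) →ₗ[ℂ] (H × K)) := by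
      rintro ⟨h, k⟩ ⟨hh, hk⟩
      obtain ⟨u, hu, w, hwmem, rfl⟩ := Submodule.mem_sup.mp hh
      obtain ⟨x, rfl⟩ := hu
      obtain ⟨n0, hn0, rfl⟩ := hwmem
      obtain ⟨n, rfl⟩ := hn0
      obtain ⟨v, rfl⟩ := hk
      refine ⟨(x, ↑n + (v - ↑(N.orthogonalProjectionOnto v))), ?_⟩
      have hvN : v - ↑(N.orthogonalProjectionOnto v) ∈ Nᗮ :=
        Submodule.sub_starProjection_mem_orthogonal (K := N) v
      have hproj : N.orthogonalProjectionOnto (↑n + (v - ↑(N.orthogonalProjectionOnto v))) = n := by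
        rw [map_add, Submodule.orthogonalProjectionOnto_mem_subspace_eq_self,
          Submodule.orthogonalProjectionOnto_apply_of_mem_orthogonal hvN, add_zero]
      have hBeq : B (↑n + (v - ↑(N.orthogonalProjectionOnto v))) = B v := by
        have hn : B ↑n = 0 := n.2
        have hp : B ↑(N.orthogonalProjectionOnto v) = 0 := (N.orthogonalProjectionOnto v).2
        simp only [map_add, map_sub, hn, hp, sub_zero, zero_add]
      have hCeq : C (↑n + (v - ↑(N.orthogonalProjectionOnto v))) = ↑(C₀ n) := by
        simp only [hCdef, ContinuousLinearMap.comp_apply, Submodule.subtypeL_apply, hproj]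
      have hdef : MC A B C (x, ↑n + (v - ↑(N.orthogonalProjectionOnto v))) =
          (A x + C (↑n + (v - ↑(N.orthogonalProjectionOnto v))),
            B (↑n + (v - ↑(N.orthogonalProjectionOnto v)))) := rfl
      rw [ContinuousLinearMap.coe_coe, hdef, hBeq, hCeq]; rfl
    have hrle : Module.rank ℂ ((H × K) ⧸ LinearMap.range (MC A B C : (H × K) →ₗ[ℂ] (H × K))) ≤
        Module.rank ℂ ((H × K) ⧸ S.prod R) := myRankQuotMono hP
    have hquot : Module.rank ℂ ((H × K) ⧸ S.prod R) =
        Module.rank ℂ (H ⧸ S) + Module.rank ℂ (K ⧸ R) := by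
      let f : (H × K) →ₗ[ℂ] (H ⧸ S) × (K ⧸ R) :=
        (S.mkQ.comp (LinearMap.fst ℂ H K)).prod (R.mkQ.comp (LinearMap.snd ℂ H K))
      have hker : LinearMap.ker f = S.prod R := by
        ext ⟨h, k⟩
        simp [f, LinearMap.mem_ker, Prod.ext_iff, Submodule.Quotient.mk_eq_zero,
          Submodule.mem_prod, Submodule.mkQ_apply]
      have hsurj : Function.Surjective f := by
        rintro ⟨a, b⟩
        obtain ⟨h, rfl⟩ := S.mkQ_surjective a
        obtain ⟨k, rfl⟩ := R.mkQ_surjective b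
        exact ⟨(h, k), rfl⟩
      calc Module.rank ℂ ((H × K) ⧸ S.prod R)
          = Module.rank ℂ ((H × K) ⧸ LinearMap.ker f) := by rw [hker]
        _ = Module.rank ℂ ((H ⧸ S) × (K ⧸ R)) :=
            (f.quotKerEquivOfSurjective hsurj).rank_eq
        _ = _ := rank_prod'
    have hHS : Module.rank ℂ (H ⧸ S) ≤
        Module.rank ℂ (V ⧸ LinearMap.range (C₀ : N →ₗ[ℂ] V)) := by
      set rg := LinearMap.range (C₀ : N →ₗ[ℂ] V) with hrg
      have hle : rg ≤ LinearMap.ker (S.mkQ.comp V.subtype) := by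
        rintro v ⟨n, rfl⟩
        simp only [LinearMap.mem_ker, LinearMap.comp_apply, Submodule.subtype_apply,
          Submodule.mkQ_apply, Submodule.Quotient.mk_eq_zero]
        exact Submodule.mem_sup_right (Submodule.mem_map_of_mem ⟨n, rfl⟩)
      refine LinearMap.rank_le_of_surjective
        (Submodule.liftQ rg (S.mkQ.comp V.subtype) hle) ?_
      intro a
      obtain ⟨h, rfl⟩ := S.mkQ_surjective a
      have hv : h - ↑(U.orthogonalProjectionOnto h) ∈ V :=
        Submodule.sub_starProjection_mem_orthogonal (K := U) h
      refine ⟨Submodule.Quotient.mk ⟨h - ↑(U.orthogonalProjectionOnto h), hv⟩, ?_⟩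
      rw [Submodule.liftQ_apply]
      simp only [LinearMap.comp_apply, Submodule.subtype_apply, Submodule.mkQ_apply]
      rw [Submodule.Quotient.eq]
      have : h - ↑(U.orthogonalProjectionOnto h) - h = -↑(U.orthogonalProjectionOnto h) := by abel
      rw [this]
      exact neg_mem (Submodule.mem_sup_left (U.orthogonalProjectionOnto h).2)
    have hKR : Module.rank ℂ (K ⧸ R) < ℵ₀ := hB
    calc Module.rank ℂ ((H × K) ⧸ LinearMap.range (MC A B C : (H × K) →ₗ[ℂ] (H × K)))
        ≤ Module.rank ℂ ((H × K) ⧸ S.prod R) := hrle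
      _ = Module.rank ℂ (H ⧸ S) + Module.rank ℂ (K ⧸ R) := hquot
      _ < ℵ₀ := add_lt_aleph0 (lt_of_le_of_lt hHS hC₀rank) hKR


theorem stmt_10
  [TopologicalSpace.SeparableSpace H] [TopologicalSpace.SeparableSpace K]
    (hH : ¬ FiniteDimensional ℂ H) (hK : ¬ FiniteDimensional ℂ K)
    (A : H →L[ℂ] H) (B : K →L[ℂ] K)
    (hA : Function.Injective A ∧ IsClosed (Set.range A)) (hB : betaDim B < ℵ₀)
    (hc : (alphaDim B ≤ betaDim A ∧ betaDim A < ℵ₀) ∨ (ℵ₀ ≤ alphaDim B ∧ ℵ₀ ≤ betaDim A)) :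
    ∃ C : K →L[ℂ] H, Function.Injective (MC A B C) ∧ betaDim (MC A B C) < ℵ₀ :=
  stmt_10_helper hH hK A B hA hB hc
end
end

section
/- There exists a bounded operator C : K → H such that the operator matrix M_C = [[A, C],[0, B]] is Fredholm left invertible (injective with finite-codimensional range) if and only if A is left invertible, B is lower semi-Fredholm, and either dim ker(B) ≤ dim coker(A) < ∞ or dim ker(B) = dim coker(A) = ∞. -/
open ContinuousLinearMap Cardinal

noncomputable section

universe u

set_option linter.unusedSectionVars false

theorem closedRange_of_quotRank_lt {E F : Type u} [NormedAddCommGroup E] [NormedSpace ℂ E]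
    [NormedAddCommGroup F] [NormedSpace ℂ F] [CompleteSpace E] [CompleteSpace F]
    (T : E →L[ℂ] F) (h : Module.rank ℂ (F ⧸ LinearMap.range (T : E →ₗ[ℂ] F)) < ℵ₀) :
    IsClosed (LinearMap.range (T : E →ₗ[ℂ] F) : Set F) := by
  obtain ⟨Q, hQ⟩ := Submodule.exists_isCompl (LinearMap.range (T : E →ₗ[ℂ] F))
  haveI : Module.Finite ℂ (F ⧸ LinearMap.range (T : E →ₗ[ℂ] F)) := Module.rank_lt_aleph0_iff.mp h
  haveI hfinQ : FiniteDimensional ℂ Q :=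
    Module.Finite.equiv (Submodule.quotientEquivOfIsCompl _ Q hQ)
  have hQclosed : IsClosed (Q : Set F) := Q.closed_of_finiteDimensional
  haveI : CompleteSpace Q := hQclosed.completeSpace_coe
  set S : E × Q →L[ℂ] F := T.comp (fst ℂ E Q) + Q.subtypeL.comp (snd ℂ E Q) with hS
  have hSapp : ∀ p : E × Q, S p = T p.1 + (p.2 : F) := fun p => rfl
  have hSsurj : Function.Surjective S := by
    intro f
    have hf : f ∈ LinearMap.range (T : E →ₗ[ℂ] F) ⊔ Q := hQ.sup_eq_top ▸ Submodule.mem_top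
    obtain ⟨w, hw, q, hq, hwq⟩ := Submodule.mem_sup.mp hf
    obtain ⟨x, hx⟩ := hw
    exact ⟨(x, ⟨q, hq⟩), by simp [hSapp, ← hwq, ← hx]⟩
  have hopen : IsOpenMap S := S.isOpenMap hSsurj
  have key : (LinearMap.range (T : E →ₗ[ℂ] F) : Set F)ᶜ = S '' {p | p.2 ≠ 0} := by
    ext f
    simp only [Set.mem_compl_iff, SetLike.mem_coe, Set.mem_image, Set.mem_setOf_eq]
    constructor
    · intro hf
      have hfm : f ∈ LinearMap.range (T : E →ₗ[ℂ] F) ⊔ Q := hQ.sup_eq_top ▸ Submodule.mem_top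
      obtain ⟨w, hw, q, hq, hwq⟩ := Submodule.mem_sup.mp hfm
      obtain ⟨x, hx⟩ := hw
      refine ⟨(x, ⟨q, hq⟩), ?_, by simp [hSapp, ← hwq, ← hx]⟩
      intro h0
      have hq0 : q = 0 := by simpa using congrArg Subtype.val h0
      subst hq0
      exact hf (by simpa [← hwq, hx] using LinearMap.mem_range_self (T : E →ₗ[ℂ] F) x)
    · rintro ⟨⟨x, q⟩, hq0, rfl⟩ hmem
      have hqQ : (q : F) ∈ Q := q.2
      have : (q : F) ∈ LinearMap.range (T : E →ₗ[ℂ] F) := by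
        have : (q : F) = S (x, q) - T x := by simp [hSapp]
        rw [this]
        exact Submodule.sub_mem _ hmem (LinearMap.mem_range_self (T : E →ₗ[ℂ] F) x)
      have : (q : F) = 0 := by
        have := hQ.disjoint.le_bot ⟨this, hqQ⟩
        simpa using this
      exact hq0 (by ext; simpa using this)
  rw [← isOpen_compl_iff, key]
  exact hopen _ (isOpen_compl_iff.mpr (isClosed_eq continuous_snd continuous_const))


/-- extension by zero as a linear isometry between Euclidean spaces -/
def euclExtendIso (n m : ℕ) (h : n ≤ m) :
    EuclideanSpace ℂ (Fin n) →ₗᵢ[ℂ] EuclideanSpace ℂ (Fin m) := by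
  refine ⟨(WithLp.linearEquiv 2 ℂ (Fin m → ℂ)).symm.toLinearMap ∘ₗ
    Function.ExtendByZero.linearMap ℂ (Fin.castLE h) ∘ₗ
    (WithLp.linearEquiv 2 ℂ (Fin n → ℂ)).toLinearMap, ?_⟩
  intro x
  have hinj : Function.Injective (Fin.castLE h) := Fin.castLE_injective h
  rw [EuclideanSpace.norm_eq, EuclideanSpace.norm_eq]
  congr 1
  have happ : ∀ p, ((WithLp.linearEquiv 2 ℂ (Fin m → ℂ)).symm.toLinearMap ∘ₗ
    Function.ExtendByZero.linearMap ℂ (Fin.castLE h) ∘ₗ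
    (WithLp.linearEquiv 2 ℂ (Fin n → ℂ)).toLinearMap) x p
      = Function.extend (Fin.castLE h) x 0 p := fun p => rfl
  calc ∑ j : Fin m, ‖((WithLp.linearEquiv 2 ℂ (Fin m → ℂ)).symm.toLinearMap ∘ₗ
    Function.ExtendByZero.linearMap ℂ (Fin.castLE h) ∘ₗ
    (WithLp.linearEquiv 2 ℂ (Fin n → ℂ)).toLinearMap) x j‖ ^ 2
      = ∑ j ∈ Finset.univ.image (Fin.castLE h),
          ‖Function.extend (Fin.castLE h) x 0 j‖ ^ 2 := by
        simp_rw [happ]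
        refine (Finset.sum_subset (Finset.subset_univ _) ?_).symm
        intro j _ hj
        have : ¬∃ i, Fin.castLE h i = j := by
          intro ⟨i, hi⟩
          exact hj (Finset.mem_image.mpr ⟨i, Finset.mem_univ i, hi⟩)
        rw [Function.extend_apply' x (0 : Fin m → ℂ) j this]
        simp
    _ = ∑ i : Fin n, ‖x i‖ ^ 2 := by
        rw [Finset.sum_image (fun i _ j _ hij => hinj hij)]
        congr 1
        ext i
        rw [hinj.extend_apply]


/-- a linear isometry between finite-dimensional inner product spaces of increasing dimensions -/
def finIso (X Y : Type u) [NormedAddCommGroup X] [InnerProductSpace ℂ X]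
    [NormedAddCommGroup Y] [InnerProductSpace ℂ Y]
    [FiniteDimensional ℂ X] [FiniteDimensional ℂ Y]
    (h : Module.finrank ℂ X ≤ Module.finrank ℂ Y) : X →ₗᵢ[ℂ] Y :=
  ((stdOrthonormalBasis ℂ Y).repr.symm.toLinearIsometry.comp
    (euclExtendIso _ _ h)).comp (stdOrthonormalBasis ℂ X).repr.toLinearIsometry

/-- an orthonormal family in a separable space is countable -/
theorem Orthonormal.countable_of_separable {E : Type u} [NormedAddCommGroup E]
    [InnerProductSpace ℂ E] [TopologicalSpace.SeparableSpace E]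
    {ι : Type u} {v : ι → E} (hv : Orthonormal ℂ v) : Countable ι := by
  have hdist : ∀ i j : ι, i ≠ j → (1 : ℝ) ≤ dist (v i) (v j) := by
    intro i j hij
    have h2 : ‖v i - v j‖ ^ 2 = 2 := by
      rw [@norm_sub_sq ℂ, hv.2 hij]
      simp only [hv.1, map_zero, mul_zero, sub_zero, one_pow]
      norm_num
    have hnn : (0 : ℝ) ≤ ‖v i - v j‖ := norm_nonneg _
    rw [dist_eq_norm]
    nlinarith
  refine Pairwise.countable_of_isOpen_disjoint (s := fun i => Metric.ball (v i) (1/2))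
    ?_ (fun i => Metric.isOpen_ball) (fun i => ⟨v i, by simp⟩)
  intro i j hij
  have := hdist i j hij
  refine Metric.ball_disjoint_ball ?_
  linarith

/-- any two infinite-dimensional separable Hilbert spaces are isometrically isomorphic -/
theorem exists_isometryEquiv_of_separable (X Y : Type u)
    [NormedAddCommGroup X] [InnerProductSpace ℂ X] [CompleteSpace X]
    [NormedAddCommGroup Y] [InnerProductSpace ℂ Y] [CompleteSpace Y]
    [TopologicalSpace.SeparableSpace X] [TopologicalSpace.SeparableSpace Y]
    (hX : ¬ FiniteDimensional ℂ X) (hY : ¬ FiniteDimensional ℂ Y) :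
    Nonempty (X ≃ₗᵢ[ℂ] Y) := by
  have key : ∀ (Z : Type u) [NormedAddCommGroup Z], ∀ [InnerProductSpace ℂ Z],
      ∀ [CompleteSpace Z] [TopologicalSpace.SeparableSpace Z], ¬ FiniteDimensional ℂ Z →
      Nonempty (Z ≃ₗᵢ[ℂ] lp (fun _ : ℕ => ℂ) 2) := by
    intro Z _ _ _ _ hZ
    obtain ⟨w, b, hb⟩ := exists_hilbertBasis ℂ Z
    have hcount : Countable w := by
      have := b.orthonormal
      rw [hb] at this
      exact this.countable_of_separable
    have hinf : Infinite w := by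
      rw [Set.infinite_coe_iff]
      intro hfin
      apply hZ
      have hspan : (Submodule.span ℂ (Set.range (⇑b))).topologicalClosure = ⊤ :=
        b.dense_span
      rw [hb] at hspan
      have : Set.range (Subtype.val : w → Z) = w := Subtype.range_coe
      rw [this] at hspan
      haveI : FiniteDimensional ℂ (Submodule.span ℂ (w : Set Z)) :=
        FiniteDimensional.span_of_finite ℂ hfin
      have hclosed : (Submodule.span ℂ (w : Set Z)).topologicalClosure
          = Submodule.span ℂ (w : Set Z) :=
        IsClosed.submodule_topologicalClosure_eq
          (Submodule.span ℂ (w : Set Z)).closed_of_finiteDimensional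
      rw [hclosed] at hspan
      have : Module.Finite ℂ Z := by
        rw [Module.finite_def]
        exact ⟨hfin.toFinset, by simpa [Set.Finite.coe_toFinset] using hspan⟩
      exact this
    obtain ⟨den⟩ := nonempty_denumerable (↥w)
    have e : ℕ ≃ w := (Denumerable.eqv w).symm
    have horth : Orthonormal ℂ (⇑b ∘ ⇑e) := b.orthonormal.comp e e.injective
    have hsp : ⊤ ≤ (Submodule.span ℂ (Set.range (⇑b ∘ ⇑e))).topologicalClosure := by
      have : Set.range (⇑b ∘ ⇑e) = Set.range ⇑b := by
        rw [Set.range_comp]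
        rw [Set.range_eq_univ.mpr e.surjective]
        simp
      rw [this]
      exact b.dense_span.ge
    exact ⟨(HilbertBasis.mk horth hsp).repr⟩
  obtain ⟨eX⟩ := key X hX
  obtain ⟨eY⟩ := key Y hY
  exact ⟨eX.trans eY.symm⟩

variable {H K : Type u}
  [NormedAddCommGroup H] [InnerProductSpace ℂ H] [CompleteSpace H]
  [NormedAddCommGroup K] [InnerProductSpace ℂ K] [CompleteSpace K]

omit [CompleteSpace H] [CompleteSpace K] in
lemma MC_apply (A : H →L[ℂ] H) (B : K →L[ℂ] K) (C : K →L[ℂ] H) (x : H) (y : K) :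
    MC A B C (x, y) = (A x + C y, B y) := rfl


theorem reverse_dir (A : H →L[ℂ] H) (B : K →L[ℂ] K) (C : K →L[ℂ] H)
    (hinj : Function.Injective (MC A B C))
    (hfin : Module.rank ℂ ((H × K) ⧸ LinearMap.range (MC A B C : (H × K) →ₗ[ℂ] (H × K))) < ℵ₀) :
    (Function.Injective A ∧ IsClosed (Set.range A)) ∧
      Module.rank ℂ (K ⧸ LinearMap.range (B : K →ₗ[ℂ] K)) < ℵ₀ ∧
        ((Module.rank ℂ (LinearMap.ker (B : K →ₗ[ℂ] K)) ≤ Module.rank ℂ (H ⧸ LinearMap.range (A : H →ₗ[ℂ] H)) ∧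
            Module.rank ℂ (H ⧸ LinearMap.range (A : H →ₗ[ℂ] H)) < ℵ₀) ∨
          (ℵ₀ ≤ Module.rank ℂ (LinearMap.ker (B : K →ₗ[ℂ] K)) ∧
            ℵ₀ ≤ Module.rank ℂ (H ⧸ LinearMap.range (A : H →ₗ[ℂ] H)))) := by
  set M := MC A B C with hM
  -- A injective
  have hAinj : Function.Injective A := by
    intro x x' h
    have : M (x, 0) = M (x', 0) := by
      simp only [hM, MC_apply, map_zero, add_zero, h]
    exact congrArg Prod.fst (hinj this)
  -- M antilipschitz
  have hclosed : IsClosed (LinearMap.range (M : (H × K) →ₗ[ℂ] (H × K)) : Set (H × K)) := closedRange_of_quotRank_lt M hfin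
  haveI : CompleteSpace (LinearMap.range (M : (H × K) →ₗ[ℂ] (H × K))) := hclosed.completeSpace_coe
  set M' : (H × K) →L[ℂ] LinearMap.range (M : (H × K) →ₗ[ℂ] (H × K)) :=
    M.codRestrict (LinearMap.range (M : (H × K) →ₗ[ℂ] (H × K))) (LinearMap.mem_range_self (M : (H × K) →ₗ[ℂ] (H × K))) with hM'
  have hker' : LinearMap.ker (M' : (H × K) →ₗ[ℂ] LinearMap.range (M : (H × K) →ₗ[ℂ] (H × K))) = ⊥ := by
    have hi : Function.Injective M' := fun a b hab => hinj (congrArg Subtype.val hab)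
    exact LinearMap.ker_eq_bot_of_injective hi
  have hrange' : LinearMap.range (M' : (H × K) →ₗ[ℂ] LinearMap.range (M : (H × K) →ₗ[ℂ] (H × K))) = ⊤ := by
    rw [LinearMap.range_eq_top]
    rintro ⟨z, x, rfl⟩
    exact ⟨x, rfl⟩
  set e := ContinuousLinearEquiv.ofBijective M' hker' hrange' with he
  have halip := e.antilipschitz
  have hbound : ∀ z : H × K, ‖z‖ ≤ ‖(e.symm : LinearMap.range (M : (H × K) →ₗ[ℂ] (H × K)) →L[ℂ] H × K)‖₊ * ‖M z‖ := by
    intro z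
    have h1 : dist z 0 ≤ ‖(e.symm : LinearMap.range (M : (H × K) →ₗ[ℂ] (H × K)) →L[ℂ] H × K)‖₊ * dist (e z) (e 0) :=
      halip.le_mul_dist z 0
    simp only [dist_eq_norm, sub_zero, map_zero] at h1
    exact h1
  -- A antilipschitz, closed range
  have hAbound : ∀ x : H, ‖x‖ ≤ ‖(e.symm : LinearMap.range (M : (H × K) →ₗ[ℂ] (H × K)) →L[ℂ] H × K)‖₊ * ‖A x‖ := by
    intro x
    have h1 := hbound (x, 0)
    have h2 : ‖((x, 0) : H × K)‖ = ‖x‖ := by simp [Prod.norm_def]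
    have h3 : ‖M (x, 0)‖ = ‖A x‖ := by
      simp [hM, MC_apply, Prod.norm_def]
    rw [h2, h3] at h1
    exact h1
  have hAlip : AntilipschitzWith _ A := AddMonoidHomClass.antilipschitz_of_bound A hAbound
  have hAclosed : IsClosed (Set.range A) := hAlip.isClosed_range A.uniformContinuous
  refine ⟨⟨hAinj, hAclosed⟩, ?_, ?_⟩
  -- β(B) ≤ β(M)
  · have hle : LinearMap.range (M : (H × K) →ₗ[ℂ] (H × K)) ≤ (LinearMap.range (B : K →ₗ[ℂ] K)).comap (LinearMap.snd ℂ H K) := by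
      rintro ⟨u, v⟩ ⟨⟨x, y⟩, hxy⟩
      have : B y = v := congrArg Prod.snd hxy
      exact ⟨y, this⟩
    set φ := (LinearMap.range (M : (H × K) →ₗ[ℂ] (H × K))).mapQ (LinearMap.range (B : K →ₗ[ℂ] K)) (LinearMap.snd ℂ H K) hle with hφdef
    have hφ : Function.Surjective φ := by
      intro z
      obtain ⟨v, rfl⟩ := Submodule.mkQ_surjective _ z
      exact ⟨Submodule.Quotient.mk ((0 : H), v), by simp [hφdef, Submodule.mapQ_apply]⟩
    exact lt_of_le_of_lt (LinearMap.rank_le_of_surjective φ hφ) hfin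
  -- dimension conditions
  · have hψ : Module.rank ℂ (LinearMap.ker (B : K →ₗ[ℂ] K)) ≤ Module.rank ℂ (H ⧸ LinearMap.range (A : H →ₗ[ℂ] H)) := by
      set ψ : LinearMap.ker (B : K →ₗ[ℂ] K) →ₗ[ℂ] H ⧸ LinearMap.range (A : H →ₗ[ℂ] H) :=
        (LinearMap.range (A : H →ₗ[ℂ] H)).mkQ ∘ₗ (C : K →ₗ[ℂ] H) ∘ₗ (LinearMap.ker (B : K →ₗ[ℂ] K)).subtype with hψdef
      refine LinearMap.rank_le_of_injective ψ ?_
      rw [← LinearMap.ker_eq_bot, LinearMap.ker_eq_bot']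
      intro y hy
      have hCy : C (y : K) ∈ LinearMap.range (A : H →ₗ[ℂ] H) := by
        have : Submodule.Quotient.mk (C (y : K)) = (0 : H ⧸ LinearMap.range (A : H →ₗ[ℂ] H)) := hy
        rwa [Submodule.Quotient.mk_eq_zero] at this
      obtain ⟨a, ha⟩ := hCy
      have hMy : M (-a, (y : K)) = M 0 := by
        simp [hM, MC_apply, ← ha, y.2, LinearMap.mem_ker.mp y.2]
      have := hinj hMy
      ext
      exact congrArg Prod.snd this
    by_cases hb : Module.rank ℂ (H ⧸ LinearMap.range (A : H →ₗ[ℂ] H)) < ℵ₀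
    · exact Or.inl ⟨hψ, hb⟩
    · push_neg at hb
      refine Or.inr ⟨?_, hb⟩
      by_contra hα
      push_neg at hα
      -- derive β(A) < ℵ₀, contradiction
      set P := LinearMap.range (A : H →ₗ[ℂ] H) with hP
      set S := Submodule.map (C : K →ₗ[ℂ] H) (LinearMap.ker (B : K →ₗ[ℂ] K)) with hSdef
      set L := P ⊔ S with hL
      set θ : H →ₗ[ℂ] (H × K) ⧸ LinearMap.range (M : (H × K) →ₗ[ℂ] (H × K)) :=
        (LinearMap.range (M : (H × K) →ₗ[ℂ] (H × K))).mkQ ∘ₗ LinearMap.inl ℂ H K with hθ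
      have hkerθ : LinearMap.ker θ = L := by
        ext u
        simp only [hθ, LinearMap.mem_ker, LinearMap.comp_apply, LinearMap.inl_apply,
          Submodule.mkQ_apply, Submodule.Quotient.mk_eq_zero]
        constructor
        · rintro ⟨⟨x, y⟩, hxy⟩
          have h1 : A x + C y = u := congrArg Prod.fst hxy
          have h2 : B y = 0 := congrArg Prod.snd hxy
          exact Submodule.mem_sup.mpr ⟨A x, LinearMap.mem_range_self (A : H →ₗ[ℂ] H) x, C y,
            Submodule.mem_map.mpr ⟨y, LinearMap.mem_ker.mpr h2, rfl⟩, h1⟩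
        · intro hu
          obtain ⟨a, ⟨x, hx⟩, c, hc, hac⟩ := Submodule.mem_sup.mp hu
          obtain ⟨y, hy, hcy⟩ := Submodule.mem_map.mp hc
          refine ⟨(x, y), ?_⟩
          have hBy : B y = 0 := hy
          have hcy' : C y = c := hcy
          simp [hM, MC_apply, ← hx, hcy', hBy, ← hac]
      -- rank (H ⧸ L) < ℵ₀
      have hHL : Module.rank ℂ (H ⧸ L) < ℵ₀ := by
        set η := L.liftQ θ (le_of_eq hkerθ.symm) with hη
        have hηinj : Function.Injective η := by
          rw [← LinearMap.ker_eq_bot]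
          exact Submodule.ker_liftQ_eq_bot L θ _ (le_of_eq hkerθ)
        exact lt_of_le_of_lt (LinearMap.rank_le_of_injective η hηinj) hfin
      -- rank of the image part is finite
      have hN' : Module.rank ℂ (Submodule.map P.mkQ L) < ℵ₀ := by
        have h1 : Submodule.map P.mkQ L = Submodule.map P.mkQ S := by
          rw [hL, Submodule.map_sup]
          have : Submodule.map P.mkQ P = ⊥ := by
            exact Submodule.mkQ_map_self P
          rw [this, bot_sup_eq]
        rw [h1]
        calc Module.rank ℂ (Submodule.map P.mkQ S) ≤ Module.rank ℂ S := rank_map_le P.mkQ S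
          _ ≤ Module.rank ℂ (LinearMap.ker (B : K →ₗ[ℂ] K)) := rank_map_le (C : K →ₗ[ℂ] H) (LinearMap.ker (B : K →ₗ[ℂ] K))
          _ < ℵ₀ := hα
      -- β(A) = rank (H⧸L) + rank (map mkQ L)
      have hsplit : Module.rank ℂ (H ⧸ P) =
          Module.rank ℂ (H ⧸ L) + Module.rank ℂ (Submodule.map P.mkQ L) := by
        have h1 := Submodule.rank_quotient_add_rank (Submodule.map P.mkQ L)
        have h2 : Module.rank ℂ ((H ⧸ P) ⧸ Submodule.map P.mkQ L) = Module.rank ℂ (H ⧸ L) :=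
          (Submodule.quotientQuotientEquivQuotient P L le_sup_left).rank_eq
        rw [← h1, h2]
      rw [hsplit] at hb
      exact absurd (add_lt_aleph0 hHL hN') (not_lt.mpr hb)

theorem forward_constr
    [TopologicalSpace.SeparableSpace H] [TopologicalSpace.SeparableSpace K]
    (A : H →L[ℂ] H) (B : K →L[ℂ] K)
    (hAinj : Function.Injective A) (hAcl : IsClosed (Set.range A))
    (hB : Module.rank ℂ (K ⧸ LinearMap.range (B : K →ₗ[ℂ] K)) < ℵ₀)
    (hdim : (Module.rank ℂ (LinearMap.ker (B : K →ₗ[ℂ] K)) ≤ Module.rank ℂ (H ⧸ LinearMap.range (A : H →ₗ[ℂ] H)) ∧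
        Module.rank ℂ (H ⧸ LinearMap.range (A : H →ₗ[ℂ] H)) < ℵ₀) ∨
      (ℵ₀ ≤ Module.rank ℂ (LinearMap.ker (B : K →ₗ[ℂ] K)) ∧ ℵ₀ ≤ Module.rank ℂ (H ⧸ LinearMap.range (A : H →ₗ[ℂ] H)))) :
    ∃ C : K →L[ℂ] H, Function.Injective (MC A B C) ∧
      Module.rank ℂ ((H × K) ⧸ LinearMap.range (MC A B C : (H × K) →ₗ[ℂ] (H × K))) < ℵ₀ := by
  classical
  set R := LinearMap.range (A : H →ₗ[ℂ] H) with hRdef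
  have hRcl : IsClosed (R : Set H) := by
    have : (R : Set H) = Set.range ⇑A := by
      ext u; simp [hRdef, LinearMap.mem_range, Set.mem_range]
    rwa [this]
  haveI : CompleteSpace R := hRcl.completeSpace_coe
  set N := LinearMap.ker (B : K →ₗ[ℂ] K) with hNdef
  haveI : CompleteSpace N := (ContinuousLinearMap.isClosed_ker B).completeSpace_coe
  set G : Submodule ℂ H := Rᗮ with hGdef
  -- the quotient H ⧸ R is isomorphic to G
  have hGQ : Module.rank ℂ (H ⧸ R) = Module.rank ℂ G :=
    (Submodule.quotientEquivOfIsCompl R Rᗮ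
      Submodule.isCompl_orthogonal_of_hasOrthogonalProjection).rank_eq
  -- obtain the isometry J
  obtain ⟨J, hJ⟩ : ∃ J : N →ₗᵢ[ℂ] G,
      (Function.Surjective J ∨ Module.rank ℂ (H ⧸ R) < ℵ₀) := by
    rcases hdim with ⟨hle, hfin⟩ | ⟨hNinf, hGinf⟩
    · haveI hGfd : FiniteDimensional ℂ G := Module.rank_lt_aleph0_iff.mp (hGQ ▸ hfin)
      haveI hNfd : FiniteDimensional ℂ N := Module.rank_lt_aleph0_iff.mp
        (lt_of_le_of_lt hle hfin)
      have hrk : Module.rank ℂ N ≤ Module.rank ℂ G := le_of_le_of_eq hle hGQ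
      have hfr : Module.finrank ℂ N ≤ Module.finrank ℂ G := by
        rw [← Nat.cast_le (α := Cardinal), Module.finrank_eq_rank, Module.finrank_eq_rank]
        exact hrk
      exact ⟨finIso N G hfr, Or.inr hfin⟩
    · haveI : SecondCountableTopology H := UniformSpace.secondCountable_of_separable H
      haveI : SecondCountableTopology K := UniformSpace.secondCountable_of_separable K
      haveI : TopologicalSpace.SeparableSpace N := by infer_instance
      haveI : TopologicalSpace.SeparableSpace G := by infer_instance
      have hNnf : ¬ FiniteDimensional ℂ N := by
        intro hfd
        exact absurd (Module.rank_lt_aleph0 ℂ N) (not_lt.mpr hNinf)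
      have hGnf : ¬ FiniteDimensional ℂ G := by
        intro hfd
        exact absurd (Module.rank_lt_aleph0 ℂ G) (not_lt.mpr (hGQ ▸ hGinf))
      obtain ⟨e⟩ := exists_isometryEquiv_of_separable N G hNnf hGnf
      exact ⟨e.toLinearIsometry, Or.inl e.surjective⟩
  -- define C
  set C₀ : K →L[ℂ] H := G.subtypeL.comp (J.toContinuousLinearMap.comp
    (N.orthogonalProjectionOnto)) with hC0def
  have hC0 : ∀ y : K, C₀ y = (J (N.orthogonalProjectionOnto y) : H) := fun y => rfl
  have hC0mem : ∀ y : K, C₀ y ∈ G := fun y => (J (N.orthogonalProjectionOnto y)).2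
  have hC0N : ∀ n : N, C₀ (n : K) = (J n : H) := by
    intro n
    rw [hC0, Submodule.orthogonalProjectionOnto_mem_subspace_eq_self n]
  set M := MC A B C₀ with hMdef
  refine ⟨C₀, ?_, ?_⟩
  · -- injectivity
    refine (injective_iff_map_eq_zero M).mpr ?_
    rintro ⟨x, y⟩ hz
    rw [hMdef, MC_apply, Prod.mk_eq_zero] at hz
    obtain ⟨h1, h2⟩ := hz
    have hyN : y ∈ N := LinearMap.mem_ker.mpr h2
    have hAx : A x ∈ R := LinearMap.mem_range_self (A : H →ₗ[ℂ] H) x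
    have hAxG : A x ∈ G := by
      have : A x = -C₀ y := by linear_combination (norm := module) h1
      rw [this]
      exact neg_mem (hC0mem y)
    have hAx0 : A x = 0 := by
      have := (Submodule.orthogonal_disjoint R).le_bot ⟨hAx, hAxG⟩
      simpa using this
    have hx0 : x = 0 := hAinj (by rw [hAx0, map_zero])
    have hCy0 : C₀ y = 0 := by
      rw [hAx0, zero_add] at h1
      exact h1
    have hyn : N.orthogonalProjectionOnto y = ⟨y, hyN⟩ := by
      have := Submodule.orthogonalProjectionOnto_mem_subspace_eq_self (K := N) ⟨y, hyN⟩
      simpa using this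
    have : (J (N.orthogonalProjectionOnto y) : H) = 0 := by rw [← hC0]; exact hCy0
    have hJ0 : J (N.orthogonalProjectionOnto y) = 0 := Subtype.ext (by simpa using this)
    have : N.orthogonalProjectionOnto y = 0 := J.injective (by rw [hJ0, map_zero])
    rw [hyn] at this
    have hy0 : y = 0 := by simpa using congrArg Subtype.val this
    simp [hx0, hy0, Prod.mk_eq_zero]
  · -- finite codimension
    set L : Submodule ℂ H := R ⊔ LinearMap.range (C₀ : K →ₗ[ℂ] H) with hLdef
    have hr1 : ∀ u ∈ R, ((u, 0) : H × K) ∈ LinearMap.range (M : (H × K) →ₗ[ℂ] (H × K)) := by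
      rintro u ⟨x, rfl⟩
      exact ⟨(x, 0), by simp [hMdef, MC_apply]⟩
    have hr2 : ∀ v : K, ((C₀ v, 0) : H × K) ∈ LinearMap.range (M : (H × K) →ₗ[ℂ] (H × K)) := by
      intro v
      refine ⟨(0, ((N.orthogonalProjectionOnto v : N) : K)), ?_⟩
      rw [ContinuousLinearMap.coe_coe, hMdef, MC_apply, map_zero, zero_add, hC0N, hC0]
      have hmem : ((N.orthogonalProjectionOnto v : N) : K) ∈ N := (N.orthogonalProjectionOnto v).2
      have : B ((N.orthogonalProjectionOnto v : N) : K) = 0 := LinearMap.mem_ker.mp hmem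
      rw [this]
    have hr3 : ∀ v : K, ((0, B v) : H × K) ∈ LinearMap.range (M : (H × K) →ₗ[ℂ] (H × K)) := by
      intro v
      have h1 : M (0, v) ∈ LinearMap.range (M : (H × K) →ₗ[ℂ] (H × K)) := LinearMap.mem_range_self (M : (H × K) →ₗ[ℂ] (H × K)) _
      rw [hMdef, MC_apply, map_zero, zero_add] at h1
      have := Submodule.sub_mem _ h1 (hr2 v)
      simpa using this
    have hprod : (L.prod (LinearMap.range (B : K →ₗ[ℂ] K))) ≤ LinearMap.range (M : (H × K) →ₗ[ℂ] (H × K)) := by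
      rintro ⟨u, w⟩ hmem
      rw [Submodule.mem_prod] at hmem
      obtain ⟨hu, hw⟩ := hmem
      simp only at hu hw
      obtain ⟨a, ha, c, hc, hac⟩ := Submodule.mem_sup.mp hu
      obtain ⟨v₀, rfl⟩ := hc
      obtain ⟨v, hv⟩ := hw
      have heq : ((u, w) : H × K) = (a, 0) + (C₀ v₀, 0) + (0, B v) := by
        rw [Prod.ext_iff]
        constructor <;> simp [← hac, ← hv]
      rw [heq]
      exact Submodule.add_mem _ (Submodule.add_mem _ (hr1 a ha) (hr2 v₀)) (hr3 v)
    -- rank bound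
    have h1 : Module.rank ℂ ((H × K) ⧸ LinearMap.range (M : (H × K) →ₗ[ℂ] (H × K))) ≤
        Module.rank ℂ ((H × K) ⧸ (L.prod (LinearMap.range (B : K →ₗ[ℂ] K)))) := by
      set φ := Submodule.mapQ (L.prod (LinearMap.range (B : K →ₗ[ℂ] K))) (LinearMap.range (M : (H × K) →ₗ[ℂ] (H × K)))
        LinearMap.id (by simpa using hprod) with hφ
      have hφs : Function.Surjective φ := by
        intro z
        obtain ⟨p, rfl⟩ := Submodule.mkQ_surjective _ z
        exact ⟨Submodule.Quotient.mk p, by simp [hφ, Submodule.mapQ_apply]⟩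
      exact LinearMap.rank_le_of_surjective φ hφs
    have h2 : Module.rank ℂ ((H × K) ⧸ (L.prod (LinearMap.range (B : K →ₗ[ℂ] K)))) =
        Module.rank ℂ (H ⧸ L) + Module.rank ℂ (K ⧸ LinearMap.range (B : K →ₗ[ℂ] K)) := by
      set f := L.mkQ.prodMap (LinearMap.range (B : K →ₗ[ℂ] K)).mkQ with hf
      have hfs : Function.Surjective f :=
        Function.Surjective.prodMap (Submodule.mkQ_surjective L)
          (Submodule.mkQ_surjective (LinearMap.range (B : K →ₗ[ℂ] K)))
      have hkf : LinearMap.ker f = L.prod (LinearMap.range (B : K →ₗ[ℂ] K)) := by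
        rw [hf, LinearMap.ker_prodMap, Submodule.ker_mkQ, Submodule.ker_mkQ]
      calc Module.rank ℂ ((H × K) ⧸ (L.prod (LinearMap.range (B : K →ₗ[ℂ] K))))
          = Module.rank ℂ ((H × K) ⧸ LinearMap.ker f) :=
            (Submodule.quotEquivOfEq _ _ hkf.symm).rank_eq
        _ = Module.rank ℂ ((H ⧸ L) × (K ⧸ LinearMap.range (B : K →ₗ[ℂ] K))) :=
            (f.quotKerEquivOfSurjective hfs).rank_eq
        _ = Module.rank ℂ (H ⧸ L) + Module.rank ℂ (K ⧸ LinearMap.range (B : K →ₗ[ℂ] K)) := rank_prod'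
    have hHL : Module.rank ℂ (H ⧸ L) < ℵ₀ := by
      rcases hJ with hJs | hJfin
      · have hGle : G ≤ LinearMap.range (C₀ : K →ₗ[ℂ] H) := by
          intro g hg
          obtain ⟨n, hn⟩ := hJs ⟨g, hg⟩
          exact ⟨(n : K), by rw [ContinuousLinearMap.coe_coe, hC0N n, hn]⟩
        have hLtop : L = ⊤ := by
          rw [eq_top_iff, ← Submodule.sup_orthogonal_of_hasOrthogonalProjection (K := R)]
          exact sup_le_sup le_rfl hGle
        haveI : Subsingleton (H ⧸ L) :=
          Submodule.Quotient.subsingleton_iff.mpr hLtop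
        rw [rank_subsingleton']
        exact aleph0_pos
      · have : Module.rank ℂ (H ⧸ L) ≤ Module.rank ℂ (H ⧸ R) := by
          set ψ := Submodule.mapQ R L LinearMap.id (by rw [Submodule.comap_id]; exact (le_sup_left : R ≤ L)) with hψ
          have hψs : Function.Surjective ψ := by
            intro z
            obtain ⟨p, rfl⟩ := Submodule.mkQ_surjective _ z
            exact ⟨Submodule.Quotient.mk p, by simp [hψ, Submodule.mapQ_apply]⟩
          exact LinearMap.rank_le_of_surjective ψ hψs
        exact lt_of_le_of_lt this hJfin
    calc Module.rank ℂ ((H × K) ⧸ LinearMap.range (M : (H × K) →ₗ[ℂ] (H × K)))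
        ≤ Module.rank ℂ (H ⧸ L) + Module.rank ℂ (K ⧸ LinearMap.range (B : K →ₗ[ℂ] K)) := h1.trans_eq h2
      _ < ℵ₀ := add_lt_aleph0 hHL hB

theorem stmt_11
  [TopologicalSpace.SeparableSpace H] [TopologicalSpace.SeparableSpace K]
    (hH : ¬ FiniteDimensional ℂ H) (hK : ¬ FiniteDimensional ℂ K)
    (A : H →L[ℂ] H) (B : K →L[ℂ] K) :
    (∃ C : K →L[ℂ] H, Function.Injective (MC A B C) ∧ betaDim (MC A B C) < ℵ₀) ↔
      (Function.Injective A ∧ IsClosed (Set.range A)) ∧ betaDim B < ℵ₀ ∧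
        ((alphaDim B ≤ betaDim A ∧ betaDim A < ℵ₀) ∨ (ℵ₀ ≤ alphaDim B ∧ ℵ₀ ≤ betaDim A)) := by
  constructor
  · rintro ⟨C, hinj, hfin⟩
    exact reverse_dir A B C hinj hfin
  · rintro ⟨⟨hAinj, hAcl⟩, hB, hdim⟩
    obtain ⟨C, h1, h2⟩ := forward_constr A B hAinj hAcl hB hdim
    exact ⟨C, h1, h2⟩
end
end
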